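/- For every fixed k ∈ {1,…,6}, the exact distortion of φ_{k,n} tends to 3 as n → ∞; that is, lim_{n→∞} (max_{z∈𝔻}|φ'_{k,n}(z)|) / (min_{z∈𝔻}|φ'_{k,n}(z)|) = 3. -/

import Mathlib

open Complex Metric Set
open scoped ENNReal

noncomputable section

/-- λ = √3 -/
def lam : ℝ := Real.sqrt 3

/-- The Möbius map f(z) = ((λ−1)z+1)/(−z+λ+1). -/
def apolF : ℂ → ℂ := fun z => (((lam : ℂ) - 1) * z + 1) / (-z + (lam : ℂ) + 1)

/-- Rotation by angle θ. -/
def Rot (θ : ℝ) : ℂ → ℂ := fun z => Complex.exp ((θ : ℂ) * Complex.I) * z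

/-- θ_k = (−1)^k · 2π/3 -/
def thetaA (k : ℕ) : ℝ := (-1 : ℝ) ^ k * (2 * Real.pi / 3)

/-- θ'_k = 2πk/3 -/
def thetaB (k : ℕ) : ℝ := 2 * Real.pi * k / 3

/-- The Apollonian generators φ_{k,n} = R_{θ'_k} ∘ f^n ∘ R_{θ_k} ∘ f. -/
def phi (k n : ℕ) : ℂ → ℂ := Rot (thetaB k) ∘ (apolF^[n]) ∘ Rot (thetaA k) ∘ apolF

/-- The closed unit disk 𝔻. -/
def unitD : Set ℂ := Metric.closedBall (0 : ℂ) 1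

def Complex.abs : AbsoluteValue ℂ ℝ where
  toFun z := ‖z‖
  map_mul' := norm_mul
  nonneg' := norm_nonneg
  eq_zero' _ := norm_eq_zero
  add_le' := norm_add_le

lemma Complex.abs_apply' (z : ℂ) : Complex.abs z = ‖z‖ := rfl
lemma Complex.abs_ofReal (r : ℝ) : Complex.abs (r : ℂ) = |r| := by
  rw [Complex.abs_apply', Complex.norm_real, Real.norm_eq_abs]
lemma Complex.abs_natCast (n : ℕ) : Complex.abs (n : ℂ) = n := by
  rw [Complex.abs_apply', Complex.norm_natCast]
lemma Complex.abs_conj (z : ℂ) : Complex.abs ((starRingEnd ℂ) z) = Complex.abs z := by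
  rw [Complex.abs_apply', Complex.abs_apply', Complex.norm_conj]
lemma Complex.sq_abs (z : ℂ) : Complex.abs z ^ 2 = Complex.normSq z := Complex.sq_norm z
lemma Complex.normSq_eq_abs (z : ℂ) : Complex.normSq z = Complex.abs z ^ 2 :=
  (Complex.sq_norm z).symm
lemma Complex.abs_exp_ofReal_mul_I (x : ℝ) : Complex.abs (Complex.exp (x * Complex.I)) = 1 :=
  Complex.norm_exp_ofReal_mul_I x

lemma lam_sq : lam ^ 2 = 3 := Real.sq_sqrt (by norm_num)
lemma lam_nonneg : 0 ≤ lam := Real.sqrt_nonneg 3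
lemma lam_gt : 1 < lam := by nlinarith [lam_sq, lam_nonneg]
lemma lam_lt : lam < 2 := by nlinarith [lam_sq, lam_nonneg]
lemma lamC_sq : (lam : ℂ) ^ 2 = 3 := by rw [← Complex.ofReal_pow, lam_sq]; norm_num
lemma lamC_ne : (lam : ℂ) ≠ 0 := by
  simp only [ne_eq, Complex.ofReal_eq_zero]; nlinarith [lam_gt]

lemma iterate_eq (n : ℕ) (z : ℂ)
    (h : ∀ m : ℕ, m ≤ n → ((lam:ℂ) + m) - m * z ≠ 0) :
    apolF^[n] z = (((lam:ℂ) - n) * z + n) / (-(n:ℂ) * z + lam + n) := by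
  induction n with
  | zero =>
    simp only [Function.iterate_zero_apply, Nat.cast_zero, sub_zero, add_zero, neg_zero,
      zero_mul, zero_add]
    rw [mul_comm, mul_div_assoc, div_self lamC_ne, mul_one]
  | succ n ih =>
    have hd1 : -(n:ℂ) * z + lam + n ≠ 0 := by
      have := h n (Nat.le_succ n); intro he; apply this; rw [← he]; ring
    have hd2 : ((lam:ℂ) + ((n:ℂ)+1)) - ((n:ℂ)+1) * z ≠ 0 := by
      have := h (n+1) le_rfl; push_cast at this ⊢; exact this
    have hd3 : -((n:ℂ)+1) * z + lam + ((n:ℂ)+1) ≠ 0 := by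
      intro he; apply hd2; rw [← he]; ring
    rw [Function.iterate_succ_apply', ih (fun m hm => h m (hm.trans (Nat.le_succ n)))]
    rw [apolF]
    have hqd : (((lam:ℂ) - n) * z + n) / (-(n:ℂ) * z + lam + n) * (-(n:ℂ) * z + lam + n)
        = ((lam:ℂ) - n) * z + n := div_mul_cancel₀ _ hd1
    have hden : -((((lam:ℂ) - n) * z + n) / (-(n:ℂ) * z + lam + n)) + (lam:ℂ) + 1
        = (lam:ℂ) * (((lam:ℂ) + ((n:ℂ)+1)) - ((n:ℂ)+1) * z) / (-(n:ℂ) * z + lam + n) := by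
      rw [eq_div_iff hd1]
      linear_combination (-1:ℂ) * hqd
    have hnum : ((lam:ℂ)-1) * ((((lam:ℂ) - n) * z + n) / (-(n:ℂ) * z + lam + n)) + 1
        = (((lam:ℂ)-1) * (((lam:ℂ) - n) * z + n) + (-(n:ℂ) * z + lam + n)) / (-(n:ℂ) * z + lam + n) := by
      rw [eq_div_iff hd1]
      linear_combination ((lam:ℂ)-1) * hqd
    rw [hnum, hden, div_div_div_comm, div_self hd1, div_one]
    push_cast
    rw [div_eq_div_iff (mul_ne_zero lamC_ne hd2) hd3]
    ring


def Am (ω : ℂ) (n : ℕ) : ℂ := ((lam:ℂ)+n)*((lam:ℂ)+1) - n*ω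
def Bm (ω : ℂ) (n : ℕ) : ℂ := ((lam:ℂ)+n) + n*((lam:ℂ)-1)*ω
def Cm (ω : ℂ) (n : ℕ) : ℂ := ((lam:ℂ)-n)*ω + n*((lam:ℂ)+1)
def Dm (ω : ℂ) (n : ℕ) : ℂ := (n:ℂ) - ((lam:ℂ)-n)*((lam:ℂ)-1)*ω

lemma abs_den_pos {z : ℂ} (hz : Complex.abs z < lam + 1) :
    0 < Complex.abs (-z + (lam:ℂ) + 1) := by
  have h : Complex.abs ((lam:ℂ) + 1) ≤ Complex.abs (-z + (lam:ℂ) + 1) + Complex.abs z := by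
    calc Complex.abs ((lam:ℂ) + 1) = Complex.abs ((-z + (lam:ℂ) + 1) + z) := by ring_nf
    _ ≤ _ := Complex.abs.add_le _ _
  have habs : Complex.abs ((lam:ℂ) + 1) = lam + 1 := by
    rw [show ((lam:ℂ)+1) = ((lam + 1 : ℝ) : ℂ) by push_cast; ring, Complex.abs_ofReal,
      abs_of_pos (by nlinarith [lam_gt])]
  linarith [habs ▸ h]

lemma abs_apolF_le {z : ℂ} (hz : Complex.abs z ≤ 1) : Complex.abs (apolF z) ≤ 1 := by
  have hzlt : Complex.abs z < lam + 1 := by nlinarith [lam_gt]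
  have hd := abs_den_pos hzlt
  rw [apolF, map_div₀, div_le_one hd]
  have hsq : (Complex.abs (((lam:ℂ)-1)*z+1))^2 ≤ (Complex.abs (-z + (lam:ℂ) + 1))^2 := by
    rw [Complex.sq_abs, Complex.sq_abs]
    simp only [Complex.normSq_apply, Complex.add_re, Complex.add_im, Complex.mul_re,
      Complex.mul_im, Complex.sub_re, Complex.sub_im, Complex.neg_re, Complex.neg_im,
      Complex.ofReal_re, Complex.ofReal_im, Complex.one_re, Complex.one_im]
    have hxy : z.re^2 + z.im^2 ≤ 1 := by
      have h1 := Complex.sq_abs z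
      have h2 := Complex.normSq_apply z
      nlinarith [Complex.abs.nonneg z]
    have hx : z.re ≤ 1 := by nlinarith [sq_nonneg z.im]
    nlinarith [lam_sq, lam_gt, lam_lt, sq_nonneg (z.re - 1), sq_nonneg z.im]
  exact (pow_le_pow_iff_left₀ (Complex.abs.nonneg _) (Complex.abs.nonneg _) (by norm_num)).mp hsq

lemma phi_eq (k n : ℕ) (z : ℂ) (hz : Complex.abs z < lam + 1)
    (hfz : Complex.abs (apolF z) < 1 + lam/(n+2)) :
    phi k n z = Complex.exp ((thetaB k : ℂ) * Complex.I) *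
      ((Cm (Complex.exp ((thetaA k : ℂ) * Complex.I)) n
          - Dm (Complex.exp ((thetaA k : ℂ) * Complex.I)) n * z) /
        (Am (Complex.exp ((thetaA k : ℂ) * Complex.I)) n
          - Bm (Complex.exp ((thetaA k : ℂ) * Complex.I)) n * z)) := by
  have lam_pos : (0:ℝ) < lam := by linarith [lam_gt]
  set ω := Complex.exp ((thetaA k : ℂ) * Complex.I) with hω
  have hωabs : Complex.abs ω = 1 := Complex.abs_exp_ofReal_mul_I _
  set w := ω * apolF z with hwdef
  have hwabs : Complex.abs w = Complex.abs (apolF z) := by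
    rw [hwdef, map_mul, hωabs, one_mul]
  have hm : ∀ m : ℕ, m ≤ n → ((lam:ℂ) + m) - m * w ≠ 0 := by
    intro m hmn he
    have h1 : Complex.abs ((m:ℂ) * w) = m * Complex.abs (apolF z) := by
      rw [map_mul, hwabs, Complex.abs_natCast]
    have h2 : ((m:ℂ) * w) = (lam:ℂ) + m := by linear_combination -he
    have h3 : Complex.abs ((lam:ℂ) + (m:ℂ)) = lam + m := by
      rw [show ((lam:ℂ)+(m:ℂ)) = ((lam + m : ℝ) : ℂ) by push_cast; ring, Complex.abs_ofReal,
        abs_of_pos (by positivity)]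
    rw [h2, h3] at h1
    have hmn' : (m:ℝ) ≤ (n:ℝ) := Nat.cast_le.mpr hmn
    have hmw : (m:ℝ) * Complex.abs (apolF z) ≤ m * (1 + lam/(n+2)) := by
      apply mul_le_mul_of_nonneg_left hfz.le (Nat.cast_nonneg m)
    have hn2 : (0:ℝ) < (n:ℝ) + 2 := by positivity
    rw [← h1] at hmw
    have hdm : lam/((n:ℝ)+2)*((n:ℝ)+2) = lam := div_mul_cancel₀ _ (ne_of_gt hn2)
    nlinarith [hmw, hmn', lam_pos, hn2, hdm, mul_le_mul_of_nonneg_right hmn' (le_of_lt lam_pos)]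
  have Dfne : (-z + (lam:ℂ) + 1) ≠ 0 := by
    intro he
    have := abs_den_pos hz
    rw [he, map_zero] at this; exact lt_irrefl 0 this
  have hNf : apolF z * (-z + (lam:ℂ) + 1) = ((lam:ℂ)-1)*z+1 := by
    rw [apolF]; exact div_mul_cancel₀ _ Dfne
  have h1 : ((lam:ℂ)-(n:ℂ))*w + n = (Cm ω n - Dm ω n * z)/(-z + (lam:ℂ) + 1) := by
    rw [eq_div_iff Dfne, Cm, Dm]
    linear_combination (((lam:ℂ)-(n:ℂ))*ω) * hNf
  have h2 : -(n:ℂ)*w + lam + n = (Am ω n - Bm ω n * z)/(-z + (lam:ℂ) + 1) := by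
    rw [eq_div_iff Dfne, Am, Bm]
    linear_combination (-(n:ℂ)*ω) * hNf
  have hiter := iterate_eq n w hm
  show Complex.exp ((thetaB k : ℂ) * Complex.I) * (apolF^[n] (ω * apolF z)) = _
  rw [← hwdef, hiter, h1, h2, div_div_div_comm, div_self Dfne, div_one]

lemma det_eq (ω : ℂ) (n : ℕ) :
    Bm ω n * Cm ω n - Am ω n * Dm ω n = 9 * ω := by
  rw [Am, Bm, Cm, Dm]
  linear_combination (((lam:ℂ)^2+3)*ω) * lamC_sq

lemma omega_re (k : ℕ) : (Complex.exp ((thetaA k : ℂ) * Complex.I)).re = -(1/2) := by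
  rw [Complex.exp_ofReal_mul_I_re, thetaA]
  rcases Nat.even_or_odd k with hk | hk
  · rw [hk.neg_one_pow, one_mul,
      show 2 * Real.pi / 3 = Real.pi - Real.pi/3 by ring, Real.cos_pi_sub,
      Real.cos_pi_div_three]
  · rw [hk.neg_one_pow, neg_one_mul, Real.cos_neg,
      show 2 * Real.pi / 3 = Real.pi - Real.pi/3 by ring, Real.cos_pi_sub,
      Real.cos_pi_div_three]

lemma omega_norm (k : ℕ) :
    (Complex.exp ((thetaA k : ℂ) * Complex.I)).re ^ 2
      + (Complex.exp ((thetaA k : ℂ) * Complex.I)).im ^ 2 = 1 := by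
  have h := Complex.abs_exp_ofReal_mul_I (thetaA k)
  have h2 := Complex.sq_abs (Complex.exp ((thetaA k : ℂ) * Complex.I))
  rw [h] at h2
  rw [Complex.normSq_apply] at h2
  nlinarith [h2]

lemma absA_sq (k n : ℕ) :
    (Complex.abs (Am (Complex.exp ((thetaA k : ℂ) * Complex.I)) n)) ^ 2
      = ((lam+n)*(lam+1) + (n:ℝ)/2)^2 + 3/4*(n:ℝ)^2 := by
  have hre := omega_re k
  have hnorm := omega_norm k
  set ω := Complex.exp ((thetaA k : ℂ) * Complex.I)
  rw [Complex.sq_abs, Complex.normSq_apply, Am]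
  simp only [Complex.add_re, Complex.add_im, Complex.sub_re, Complex.sub_im, Complex.mul_re,
    Complex.mul_im, Complex.ofReal_re, Complex.ofReal_im, Complex.natCast_re, Complex.natCast_im,
    Complex.one_re, Complex.one_im]
  linear_combination (-2*(n:ℝ)*((lam+(n:ℝ))*(lam+1))) * hre + (n:ℝ)^2 * hnorm

lemma absB_sq (k n : ℕ) :
    (Complex.abs (Bm (Complex.exp ((thetaA k : ℂ) * Complex.I)) n)) ^ 2
      = ((lam+n) - (n:ℝ)*(lam-1)/2)^2 + 3/4*((lam-1)*(n:ℝ))^2 := by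
  have hre := omega_re k
  have hnorm := omega_norm k
  set ω := Complex.exp ((thetaA k : ℂ) * Complex.I)
  rw [Complex.sq_abs, Complex.normSq_apply, Bm]
  simp only [Complex.add_re, Complex.add_im, Complex.sub_re, Complex.sub_im, Complex.mul_re,
    Complex.mul_im, Complex.ofReal_re, Complex.ofReal_im, Complex.natCast_re, Complex.natCast_im,
    Complex.one_re, Complex.one_im]
  linear_combination (2*(n:ℝ)*(lam+(n:ℝ))*(lam-1)) * hre + ((n:ℝ)*(lam-1))^2 * hnorm

lemma absB_lt_absA (k n : ℕ) :
    Complex.abs (Bm (Complex.exp ((thetaA k : ℂ) * Complex.I)) n)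
      < Complex.abs (Am (Complex.exp ((thetaA k : ℂ) * Complex.I)) n) := by
  have hA := absA_sq k n
  have hB := absB_sq k n
  have hsq : (Complex.abs (Bm (Complex.exp ((thetaA k : ℂ) * Complex.I)) n))^2
      < (Complex.abs (Am (Complex.exp ((thetaA k : ℂ) * Complex.I)) n))^2 := by
    rw [hA, hB]
    have key : ((lam + (n:ℝ)) * (lam + 1) + (n:ℝ)/2)^2 + 3/4*(n:ℝ)^2
        - ((lam + (n:ℝ) - (n:ℝ)*(lam-1)/2)^2 + 3/4*((lam-1)*(n:ℝ))^2)
        = (3+2*lam)*(lam+(n:ℝ))^2 + 2*lam*(n:ℝ)*(lam+(n:ℝ)) + (2*lam-3)*(n:ℝ)^2 := by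
      linear_combination (lam^2 + 2*lam*(n:ℝ)) * lam_sq
    have hn0 : (0:ℝ) ≤ (n:ℝ) := Nat.cast_nonneg n
    have hln : (0:ℝ) < lam + (n:ℝ) := by linarith [lam_gt]
    have h2l : (0:ℝ) < 2*lam - 3 := by nlinarith [lam_sq, lam_gt]
    have t1 : (0:ℝ) < (3+2*lam)*(lam+(n:ℝ))^2 :=
      mul_pos (by linarith [lam_gt]) (pow_pos hln 2)
    have t2 : (0:ℝ) ≤ 2*lam*(n:ℝ)*(lam+(n:ℝ)) := by
      apply mul_nonneg (mul_nonneg (by linarith [lam_gt]) hn0) hln.le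
    have t3 : (0:ℝ) ≤ (2*lam-3)*(n:ℝ)^2 := mul_nonneg h2l.le (sq_nonneg _)
    linarith [key, t1, t2, t3]
  by_contra hle
  push_neg at hle
  nlinarith [Complex.abs.nonneg (Am (Complex.exp ((thetaA k : ℂ) * Complex.I)) n), hsq, hle]

lemma absAmBz_lower (k n : ℕ) {z : ℂ} (hz : Complex.abs z ≤ 1) :
    Complex.abs (Am (Complex.exp ((thetaA k : ℂ) * Complex.I)) n)
      - Complex.abs (Bm (Complex.exp ((thetaA k : ℂ) * Complex.I)) n)
      ≤ Complex.abs (Am (Complex.exp ((thetaA k : ℂ) * Complex.I)) n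
          - Bm (Complex.exp ((thetaA k : ℂ) * Complex.I)) n * z) := by
  set ω := Complex.exp ((thetaA k : ℂ) * Complex.I)
  have h1 : Complex.abs (Am ω n) - Complex.abs (Bm ω n * z)
      ≤ Complex.abs (Am ω n - Bm ω n * z) := by
    have := Complex.abs.le_sub (Am ω n) (Bm ω n * z)
    linarith
  have h2 : Complex.abs (Bm ω n * z) ≤ Complex.abs (Bm ω n) := by
    rw [map_mul]
    nlinarith [Complex.abs.nonneg (Bm ω n), Complex.abs.nonneg z, hz]
  linarith

lemma absAmBz_upper (k n : ℕ) {z : ℂ} (hz : Complex.abs z ≤ 1) :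
    Complex.abs (Am (Complex.exp ((thetaA k : ℂ) * Complex.I)) n
        - Bm (Complex.exp ((thetaA k : ℂ) * Complex.I)) n * z)
      ≤ Complex.abs (Am (Complex.exp ((thetaA k : ℂ) * Complex.I)) n)
        + Complex.abs (Bm (Complex.exp ((thetaA k : ℂ) * Complex.I)) n) := by
  set ω := Complex.exp ((thetaA k : ℂ) * Complex.I)
  have h1 := Complex.abs.sub_le_add (Am ω n) (Bm ω n * z)
  have h2 : Complex.abs (Bm ω n * z) ≤ Complex.abs (Bm ω n) := by
    rw [map_mul]
    nlinarith [Complex.abs.nonneg (Bm ω n), Complex.abs.nonneg z, hz]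
  linarith

lemma AmBz_ne (k n : ℕ) {z : ℂ} (hz : Complex.abs z ≤ 1) :
    Am (Complex.exp ((thetaA k : ℂ) * Complex.I)) n
      - Bm (Complex.exp ((thetaA k : ℂ) * Complex.I)) n * z ≠ 0 := by
  intro he
  have h1 := absAmBz_lower k n hz
  rw [he, map_zero] at h1
  linarith [absB_lt_absA k n]

lemma deriv_phi (k n : ℕ) {z : ℂ} (hz : z ∈ unitD) :
    deriv (phi k n) z = Complex.exp ((thetaB k : ℂ) * Complex.I) * (9 *
      Complex.exp ((thetaA k : ℂ) * Complex.I)) /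
      (Am (Complex.exp ((thetaA k : ℂ) * Complex.I)) n
        - Bm (Complex.exp ((thetaA k : ℂ) * Complex.I)) n * z)^2 := by
  have lam_pos : (0:ℝ) < lam := by linarith [lam_gt]
  have hzabs : Complex.abs z ≤ 1 := by
    simpa [unitD, Complex.dist_eq, Complex.abs_apply'] using hz
  set ω := Complex.exp ((thetaA k : ℂ) * Complex.I) with hωdef
  set eB := Complex.exp ((thetaB k : ℂ) * Complex.I) with heBdef
  set U : Set ℂ := Metric.ball (0:ℂ) (lam+1) ∩ apolF ⁻¹' (Metric.ball (0:ℂ) (1+lam/(n+2)))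
    with hUdef
  have hUopen : IsOpen U := by
    apply ContinuousOn.isOpen_inter_preimage ?_ Metric.isOpen_ball Metric.isOpen_ball
    intro x hx
    have hxlt : Complex.abs x < lam + 1 := by
      simpa [Complex.dist_eq, Complex.abs_apply'] using hx
    have hd := abs_den_pos hxlt
    apply ContinuousWithinAt.div
    · exact Continuous.continuousWithinAt (by continuity)
    · exact Continuous.continuousWithinAt (by continuity)
    · intro he; rw [he, map_zero] at hd; exact lt_irrefl 0 hd
  have hzU : z ∈ U := by
    constructor
    · simp only [Metric.mem_ball, Complex.dist_eq, sub_zero]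
      linarith [lam_gt, hzabs, Complex.abs_apply' z]
    · simp only [Set.mem_preimage, Metric.mem_ball, Complex.dist_eq, sub_zero]
      have := abs_apolF_le hzabs
      have : lam/((n:ℝ)+2) > 0 := by positivity
      linarith [abs_apolF_le hzabs, Complex.abs_apply' (apolF z)]
  have hnhds : U ∈ nhds z := hUopen.mem_nhds hzU
  have heq : Set.EqOn (phi k n) (fun y => eB * ((Cm ω n - Dm ω n * y) / (Am ω n - Bm ω n * y))) U := by
    intro y hy
    have hy1 : Complex.abs y < lam + 1 := by
      simpa [Complex.dist_eq, Complex.abs_apply'] using hy.1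
    have hy2 : Complex.abs (apolF y) < 1 + lam/((n:ℝ)+2) := by
      simpa [Complex.dist_eq, Complex.abs_apply'] using hy.2
    exact phi_eq k n y hy1 hy2
  have hfeq : phi k n =ᶠ[nhds z] (fun y => eB * ((Cm ω n - Dm ω n * y) / (Am ω n - Bm ω n * y))) :=
    Filter.eventuallyEq_of_mem hnhds heq
  rw [hfeq.deriv_eq]
  have hne : Am ω n - Bm ω n * z ≠ 0 := AmBz_ne k n hzabs
  have h1 : HasDerivAt (fun y : ℂ => Cm ω n - Dm ω n * y) (-(Dm ω n)) z := by
    simpa using ((hasDerivAt_id z).const_mul (Dm ω n)).const_sub (Cm ω n)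
  have h2 : HasDerivAt (fun y : ℂ => Am ω n - Bm ω n * y) (-(Bm ω n)) z := by
    simpa using ((hasDerivAt_id z).const_mul (Bm ω n)).const_sub (Am ω n)
  have h3 := (h1.div h2 hne).const_mul eB
  rw [(show deriv (fun y => eB * ((Cm ω n - Dm ω n * y) / (Am ω n - Bm ω n * y))) z = _ from h3.deriv)]
  have hdet : -(Dm ω n) * (Am ω n - Bm ω n * z) - (Cm ω n - Dm ω n * z) * (-(Bm ω n)) = 9 * ω := by
    linear_combination det_eq ω n
  rw [hdet]; field_simp

lemma abs_deriv_phi (k n : ℕ) {z : ℂ} (hz : z ∈ unitD) :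
    Complex.abs (deriv (phi k n) z) =
      9 / (Complex.abs (Am (Complex.exp ((thetaA k : ℂ) * Complex.I)) n
        - Bm (Complex.exp ((thetaA k : ℂ) * Complex.I)) n * z))^2 := by
  rw [deriv_phi k n hz, map_div₀, map_mul, map_mul, Complex.abs_exp_ofReal_mul_I,
    Complex.abs_exp_ofReal_mul_I, map_pow]
  norm_num [Complex.abs_apply']

lemma isGreatest_sup (k n : ℕ) :
    IsGreatest ((fun z => Complex.abs (deriv (phi k n) z)) '' unitD)
      (9 / (Complex.abs (Am (Complex.exp ((thetaA k : ℂ) * Complex.I)) n)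
        - Complex.abs (Bm (Complex.exp ((thetaA k : ℂ) * Complex.I)) n))^2) := by
  set ω := Complex.exp ((thetaA k : ℂ) * Complex.I) with hωdef
  set a := Complex.abs (Am ω n) with hadef
  set b := Complex.abs (Bm ω n) with hbdef
  have hba : b < a := absB_lt_absA k n
  have hb0 : 0 ≤ b := Complex.abs.nonneg _
  have ha0 : 0 < a := lt_of_le_of_lt hb0 hba
  constructor
  · rcases eq_or_ne (Bm ω n) 0 with hB | hB
    · refine ⟨0, by simp [unitD], ?_⟩
      beta_reduce
      rw [abs_deriv_phi k n (show (0:ℂ) ∈ unitD by simp [unitD])]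
      rw [hB] at hbdef ⊢
      simp only [map_zero] at hbdef
      rw [hbdef]
      simp
      rfl
    · have hbpos : 0 < b := by
        rcases lt_or_eq_of_le hb0 with h | h
        · exact h
        · exact absurd (Complex.abs.eq_zero.mp h.symm) hB
      set z₁ : ℂ := Am ω n * (starRingEnd ℂ) (Bm ω n) / ((a*b : ℝ) : ℂ) with hz₁
      have haC : ((a:ℝ):ℂ) ≠ 0 := by
        simp only [ne_eq, Complex.ofReal_eq_zero]; linarith
      have hbC : ((b:ℝ):ℂ) ≠ 0 := by
        simp only [ne_eq, Complex.ofReal_eq_zero]; linarith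
      have habz : Complex.abs z₁ = 1 := by
        rw [hz₁, map_div₀, map_mul, Complex.abs_conj, Complex.abs_ofReal, ← hadef, ← hbdef,
          abs_of_pos (mul_pos ha0 hbpos)]
        field_simp
      have hz₁D : z₁ ∈ unitD := by
        simp [unitD, Complex.dist_eq, ← Complex.abs_apply', habz]
      refine ⟨z₁, hz₁D, ?_⟩
      beta_reduce
      rw [abs_deriv_phi k n hz₁D]
      have hmc : Bm ω n * (starRingEnd ℂ) (Bm ω n) = ((b^2 : ℝ) : ℂ) := by
        rw [Complex.mul_conj, Complex.normSq_eq_abs, ← hbdef]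
      have hcalc : Am ω n - Bm ω n * z₁ = Am ω n * ((((a-b)/a : ℝ)) : ℂ) := by
        rw [hz₁]
        have h4 : Bm ω n * (Am ω n * (starRingEnd ℂ) (Bm ω n) / ((a*b : ℝ) : ℂ))
            = Am ω n * ((b^2:ℝ):ℂ) / ((a*b : ℝ) : ℂ) := by
          rw [mul_div_assoc', mul_left_comm, hmc, mul_div_assoc]
        rw [h4]
        push_cast
        field_simp
      rw [hcalc, map_mul, Complex.abs_ofReal, ← hadef, abs_of_pos (div_pos (by linarith) ha0)]
      rw [show a * ((a-b)/a) = a - b by field_simp]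
  · rintro y ⟨z, hzD, rfl⟩
    have hzabs : Complex.abs z ≤ 1 := by simpa [unitD, Complex.dist_eq, Complex.abs_apply'] using hzD
    beta_reduce
    rw [abs_deriv_phi k n hzD]
    apply div_le_div_of_nonneg_left (by norm_num) (by nlinarith [hba])
    have := absAmBz_lower k n hzabs
    nlinarith [this, Complex.abs.nonneg (Am ω n - Bm ω n * z)]

lemma isLeast_inf (k n : ℕ) :
    IsLeast ((fun z => Complex.abs (deriv (phi k n) z)) '' unitD)
      (9 / (Complex.abs (Am (Complex.exp ((thetaA k : ℂ) * Complex.I)) n)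
        + Complex.abs (Bm (Complex.exp ((thetaA k : ℂ) * Complex.I)) n))^2) := by
  set ω := Complex.exp ((thetaA k : ℂ) * Complex.I) with hωdef
  set a := Complex.abs (Am ω n) with hadef
  set b := Complex.abs (Bm ω n) with hbdef
  have hba : b < a := absB_lt_absA k n
  have hb0 : 0 ≤ b := Complex.abs.nonneg _
  have ha0 : 0 < a := lt_of_le_of_lt hb0 hba
  constructor
  · rcases eq_or_ne (Bm ω n) 0 with hB | hB
    · refine ⟨0, by simp [unitD], ?_⟩
      beta_reduce
      rw [abs_deriv_phi k n (show (0:ℂ) ∈ unitD by simp [unitD])]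
      rw [hB] at hbdef ⊢
      simp only [map_zero] at hbdef
      rw [hbdef]
      simp
      rfl
    · have hbpos : 0 < b := by
        rcases lt_or_eq_of_le hb0 with h | h
        · exact h
        · exact absurd (Complex.abs.eq_zero.mp h.symm) hB
      set z₁ : ℂ := -(Am ω n * (starRingEnd ℂ) (Bm ω n)) / ((a*b : ℝ) : ℂ) with hz₁
      have habz : Complex.abs z₁ = 1 := by
        rw [hz₁, map_div₀, map_neg_eq_map, map_mul, Complex.abs_conj, Complex.abs_ofReal,
          ← hadef, ← hbdef, abs_of_pos (mul_pos ha0 hbpos)]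
        field_simp
      have hz₁D : z₁ ∈ unitD := by
        simp [unitD, Complex.dist_eq, ← Complex.abs_apply', habz]
      refine ⟨z₁, hz₁D, ?_⟩
      beta_reduce
      rw [abs_deriv_phi k n hz₁D]
      have hmc : Bm ω n * (starRingEnd ℂ) (Bm ω n) = ((b^2 : ℝ) : ℂ) := by
        rw [Complex.mul_conj, Complex.normSq_eq_abs, ← hbdef]
      have hcalc : Am ω n - Bm ω n * z₁ = Am ω n * ((((a+b)/a : ℝ)) : ℂ) := by
        rw [hz₁]
        have h4 : Bm ω n * (-(Am ω n * (starRingEnd ℂ) (Bm ω n)) / ((a*b : ℝ) : ℂ))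
            = -(Am ω n * ((b^2:ℝ):ℂ)) / ((a*b : ℝ) : ℂ) := by
          rw [mul_div_assoc', mul_neg, mul_left_comm, hmc, neg_div]
        rw [h4]
        push_cast
        have haC : ((a:ℝ):ℂ) ≠ 0 := by
          simp only [ne_eq, Complex.ofReal_eq_zero]; linarith
        have hbC : ((b:ℝ):ℂ) ≠ 0 := by
          simp only [ne_eq, Complex.ofReal_eq_zero]; linarith
        field_simp
        ring
      rw [hcalc, map_mul, Complex.abs_ofReal, ← hadef,
        abs_of_pos (div_pos (by linarith) ha0)]
      rw [show a * ((a+b)/a) = a + b by field_simp]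
  · rintro y ⟨z, hzD, rfl⟩
    have hzabs : Complex.abs z ≤ 1 := by simpa [unitD, Complex.dist_eq, Complex.abs_apply'] using hzD
    beta_reduce
    rw [abs_deriv_phi k n hzD]
    apply div_le_div_of_nonneg_left (by norm_num)
      (pow_pos (Complex.abs.pos (AmBz_ne k n hzabs)) 2)
    nlinarith [absAmBz_upper k n hzabs, Complex.abs.nonneg (Am ω n - Bm ω n * z), hb0, ha0]

def Pfun (x : ℝ) : ℝ := ((lam*x+1)*(lam+1) + 1/2)^2 + 3/4
def Qfun (x : ℝ) : ℝ := (lam*x + (3-lam)/2)^2 + 3/4*(lam-1)^2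

lemma ratio_eq (k n : ℕ) (hn : 1 ≤ n) :
    sSup ((fun z => Complex.abs (deriv (phi k n) z)) '' unitD) /
      sInf ((fun z => Complex.abs (deriv (phi k n) z)) '' unitD)
    = (Real.sqrt (Pfun (1/n)) + Real.sqrt (Qfun (1/n)))^2
      / (Real.sqrt (Pfun (1/n)) - Real.sqrt (Qfun (1/n)))^2 := by
  set ω := Complex.exp ((thetaA k : ℂ) * Complex.I) with hωdef
  set a := Complex.abs (Am ω n) with hadef
  set b := Complex.abs (Bm ω n) with hbdef
  have hba : b < a := absB_lt_absA k n
  have hb0 : 0 ≤ b := Complex.abs.nonneg _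
  have hn0 : (0:ℝ) < n := by exact_mod_cast hn
  have hPge : (0:ℝ) ≤ Pfun (1/n) := by rw [Pfun]; positivity
  have hQge : (0:ℝ) ≤ Qfun (1/n) := by rw [Qfun]; positivity
  set u := Real.sqrt (Pfun (1/n)) with hu
  set v := Real.sqrt (Qfun (1/n)) with hv
  have ha : a = n * u := by
    have h2 : ((n:ℝ) * u)^2 = a^2 := by
      rw [mul_pow, hu, Real.sq_sqrt hPge, hadef, absA_sq, Pfun]
      field_simp
    have h3 : a = Real.sqrt (a^2) := (Real.sqrt_sq (Complex.abs.nonneg _)).symm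
    rw [h3, ← h2, Real.sqrt_sq (by positivity)]
  have hb : b = n * v := by
    have h2 : ((n:ℝ) * v)^2 = b^2 := by
      rw [mul_pow, hv, Real.sq_sqrt hQge, hbdef, absB_sq, Qfun]
      field_simp
      ring
    have h3 : b = Real.sqrt (b^2) := (Real.sqrt_sq (Complex.abs.nonneg _)).symm
    rw [h3, ← h2, Real.sqrt_sq (by positivity)]
  rw [(isGreatest_sup k n).csSup_eq, (isLeast_inf k n).csInf_eq, ← hωdef, ← hadef, ← hbdef]
  rw [div_div_div_comm, div_self (by norm_num : (9:ℝ) ≠ 0), one_div, inv_div]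
  rw [show a + b = (n:ℝ) * (u + v) by rw [ha, hb]; ring,
    show a - b = (n:ℝ) * (u - v) by rw [ha, hb]; ring,
    mul_pow, mul_pow, mul_div_mul_left _ _ (pow_ne_zero 2 (ne_of_gt hn0))]

/-- The exact distortion of φ_{k,n} tends to 3 as n → ∞. -/
theorem apollonian_distortion_limit (k : ℕ) (hk1 : 1 ≤ k) (hk6 : k ≤ 6) :
    Filter.Tendsto
      (fun n : ℕ =>
        sSup ((fun z => ‖deriv (phi k n) z‖) '' unitD) /
          sInf ((fun z => ‖deriv (phi k n) z‖) '' unitD))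
      Filter.atTop (nhds 3) := by
  have hP0 : Pfun 0 = 6 + 3*lam := by rw [Pfun]; linear_combination lam_sq
  have hQ0 : Qfun 0 = 6 - 3*lam := by rw [Qfun]; linear_combination lam_sq
  have hP0' : (0:ℝ) ≤ Pfun 0 := by rw [hP0]; linarith [lam_gt]
  have hQ0' : (0:ℝ) ≤ Qfun 0 := by rw [hQ0]; linarith [lam_lt]
  set α := Real.sqrt (Pfun 0) with hαdef
  set β := Real.sqrt (Qfun 0) with hβdef
  have hα2 : α^2 = 6+3*lam := by rw [hαdef, Real.sq_sqrt hP0', hP0]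
  have hβ2 : β^2 = 6-3*lam := by rw [hβdef, Real.sq_sqrt hQ0', hQ0]
  have hαβ : α*β = 3 := by
    rw [hαdef, hβdef, ← Real.sqrt_mul hP0', hP0, hQ0,
      show (6+3*lam)*(6-3*lam) = 9 by linear_combination (-9)*lam_sq,
      show (9:ℝ) = 3^2 by norm_num, Real.sqrt_sq (by norm_num : (0:ℝ) ≤ 3)]
  have hβα : β < α := by
    nlinarith [Real.sqrt_nonneg (Qfun 0), Real.sqrt_nonneg (Pfun 0), hα2, hβ2, lam_gt]
  have hβ0 : 0 ≤ β := Real.sqrt_nonneg _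
  have hval : (α+β)^2/(α-β)^2 = 3 := by
    rw [div_eq_iff (by nlinarith : ((α-β)^2 : ℝ) ≠ 0)]
    linear_combination (-2)*hα2 + (-2)*hβ2 + 8*hαβ
  have h0 : Filter.Tendsto (fun n:ℕ => 1/(n:ℝ)) Filter.atTop (nhds 0) :=
    tendsto_one_div_atTop_nhds_zero_nat
  have hPc : Continuous Pfun := by unfold Pfun; continuity
  have hQc : Continuous Qfun := by unfold Qfun; continuity
  have hu : Filter.Tendsto (fun n:ℕ => Real.sqrt (Pfun (1/n))) Filter.atTop (nhds α) :=
    (Real.continuous_sqrt.tendsto _).comp ((hPc.tendsto 0).comp h0)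
  have hv : Filter.Tendsto (fun n:ℕ => Real.sqrt (Qfun (1/n))) Filter.atTop (nhds β) :=
    (Real.continuous_sqrt.tendsto _).comp ((hQc.tendsto 0).comp h0)
  have hG : Filter.Tendsto
      (fun n:ℕ => (Real.sqrt (Pfun (1/n)) + Real.sqrt (Qfun (1/n)))^2
        / (Real.sqrt (Pfun (1/n)) - Real.sqrt (Qfun (1/n)))^2)
      Filter.atTop (nhds ((α+β)^2/(α-β)^2)) :=
    Filter.Tendsto.div ((hu.add hv).pow 2) ((hu.sub hv).pow 2) (by nlinarith)
  rw [hval] at hG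
  have hev : (fun n:ℕ => (Real.sqrt (Pfun (1/n)) + Real.sqrt (Qfun (1/n)))^2
        / (Real.sqrt (Pfun (1/n)) - Real.sqrt (Qfun (1/n)))^2)
      =ᶠ[Filter.atTop] (fun n : ℕ =>
        sSup ((fun z => Complex.abs (deriv (phi k n) z)) '' unitD) /
          sInf ((fun z => Complex.abs (deriv (phi k n) z)) '' unitD)) :=
    Filter.eventually_atTop.2 ⟨1, fun n hn => (ratio_eq k n hn).symm⟩
  exact Filter.Tendsto.congr' hev hG


end
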